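/- arXiv:0805.3437 — 5 statements merged into one kernel-verified Lean document; each statement's English description precedes it below -/
import Mathlib

section
/- Let α, β, γ ∈ Aut_Hopf(H), let M be an (α,β)-Yetter-Drinfeld module and N a (β,γ)-Yetter-Drinfeld module. Then M ⊗̃ N = F(M ⊗̂ N): the (α,γ)-Yetter-Drinfeld module M ⊗̃ N (that is, M ⊗ N with left H-action h·(m⊗n) = h₁·m ⊗ h₂·n and right H-coaction m⊗n ↦ (m₍₀₎ ⊗ n₍₀₎) ⊗ n₍₁₎m₍₁₎) coincides, as a module and as a comodule, with the image under the functor F from _H𝒴𝒟^H(αβ,γβ) to _H𝒴𝒟^H(α,γ) of the (αβ,γβ)-Yetter-Drinfeld module M ⊗̂ N. -/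
open TensorProduct

noncomputable section

namespace GYD

variable (k H : Type) [Field k] [Ring H] [HopfAlgebra k H]

/-- `φ` is a Hopf algebra automorphism of `H` (a linear equivalence which is both an
algebra morphism and a coalgebra morphism). -/
def IsHopfAut (φ : H ≃ₗ[k] H) : Prop :=
  (∀ x y : H, φ (x * y) = φ x * φ y) ∧ (φ 1 = 1) ∧
  (∀ h : H, Coalgebra.comul (R := k) (φ h)
      = TensorProduct.map φ.toLinearMap φ.toLinearMap (Coalgebra.comul (R := k) h)) ∧
  (∀ h : H, Coalgebra.counit (R := k) (φ h) = Coalgebra.counit (R := k) h)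

/-- `Sinv` is a two-sided inverse of the antipode of `H`. -/
def IsAntipodeInv (Sinv : H → H) : Prop :=
  (∀ h : H, HopfAlgebra.antipode (R := k) (Sinv h) = h) ∧
  (∀ h : H, Sinv (HopfAlgebra.antipode (R := k) h) = h)

/-- The data `(act, coact)` makes `M` an `(α, β)`-Yetter-Drinfeld module over `H`:
`M` is a left `H`-module, a right `H`-comodule, and the compatibility
`(h·m)₍₀₎ ⊗ (h·m)₍₁₎ = h₂·m₍₀₎ ⊗ β(h₃) m₍₁₎ α(Sinv(h₁))` holds (expressed via
arbitrary finite representations of `(Δ ⊗ id)(Δ h)` and of `coact m`). -/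
def IsYD (Sinv α β : H → H) {M : Type} [AddCommGroup M] [Module k M]
    (act : H →ₗ[k] M →ₗ[k] M) (coact : M →ₗ[k] M ⊗[k] H) : Prop :=
  (∀ m : M, act 1 m = m) ∧
  (∀ (g h : H) (m : M), act (g * h) m = act g (act h m)) ∧
  (∀ m : M, LinearMap.rTensor H coact (coact m)
      = (TensorProduct.assoc k M H H).symm
          (LinearMap.lTensor M (Coalgebra.comul (R := k)) (coact m))) ∧
  (∀ m : M,
    TensorProduct.rid k M (LinearMap.lTensor M (Coalgebra.counit (R := k)) (coact m)) = m) ∧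
  (∀ (h : H) (m : M) (s t : Finset ℕ) (a b c : ℕ → H) (m₀ : ℕ → M) (m₁ : ℕ → H),
    LinearMap.rTensor H (Coalgebra.comul (R := k)) (Coalgebra.comul (R := k) h)
        = ∑ i ∈ s, (a i ⊗ₜ[k] b i) ⊗ₜ[k] c i →
    coact m = ∑ j ∈ t, m₀ j ⊗ₜ[k] m₁ j →
    coact (act h m) = ∑ i ∈ s, ∑ j ∈ t,
      act (b i) (m₀ j) ⊗ₜ[k] (β (c i) * m₁ j * α (Sinv (a i))))

/-- Characterization of the action `h · (m ⊗ n) = θ₁(h₁)·m ⊗ θ₂(h₂)·n` on `M ⊗ N`. -/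
def TensorActChar (θ₁ θ₂ : H → H) {M N : Type} [AddCommGroup M] [Module k M]
    [AddCommGroup N] [Module k N]
    (actM : H →ₗ[k] M →ₗ[k] M) (actN : H →ₗ[k] N →ₗ[k] N)
    (act : H →ₗ[k] (M ⊗[k] N) →ₗ[k] (M ⊗[k] N)) : Prop :=
  ∀ (h : H) (m : M) (n : N) (s : Finset ℕ) (p q : ℕ → H),
    Coalgebra.comul (R := k) h = ∑ i ∈ s, p i ⊗ₜ[k] q i →
    act h (m ⊗ₜ[k] n) = ∑ i ∈ s, actM (θ₁ (p i)) m ⊗ₜ[k] actN (θ₂ (q i)) n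

/-- Characterization of the "type two" action `h · (m ⊗ n) = h₂·m ⊗ h₁·n` on `M ⊗ N`. -/
def TensorActCharTwo {M N : Type} [AddCommGroup M] [Module k M]
    [AddCommGroup N] [Module k N]
    (actM : H →ₗ[k] M →ₗ[k] M) (actN : H →ₗ[k] N →ₗ[k] N)
    (act : H →ₗ[k] (M ⊗[k] N) →ₗ[k] (M ⊗[k] N)) : Prop :=
  ∀ (h : H) (m : M) (n : N) (s : Finset ℕ) (p q : ℕ → H),
    Coalgebra.comul (R := k) h = ∑ i ∈ s, p i ⊗ₜ[k] q i →
    act h (m ⊗ₜ[k] n) = ∑ i ∈ s, actM (q i) m ⊗ₜ[k] actN (p i) n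

/-- Characterization of the coaction `m ⊗ n ↦ (m₍₀₎ ⊗ n₍₀₎) ⊗ n₍₁₎ m₍₁₎` on `M ⊗ N`. -/
def TensorCoactChar {M N : Type} [AddCommGroup M] [Module k M]
    [AddCommGroup N] [Module k N]
    (coactM : M →ₗ[k] M ⊗[k] H) (coactN : N →ₗ[k] N ⊗[k] H)
    (coact : M ⊗[k] N →ₗ[k] (M ⊗[k] N) ⊗[k] H) : Prop :=
  ∀ (m : M) (n : N) (s t : Finset ℕ) (m₀ : ℕ → M) (m₁ : ℕ → H) (n₀ : ℕ → N) (n₁ : ℕ → H),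
    coactM m = ∑ i ∈ s, m₀ i ⊗ₜ[k] m₁ i →
    coactN n = ∑ j ∈ t, n₀ j ⊗ₜ[k] n₁ j →
    coact (m ⊗ₜ[k] n) = ∑ i ∈ s, ∑ j ∈ t, (m₀ i ⊗ₜ[k] n₀ j) ⊗ₜ[k] (n₁ j * m₁ i)

/-- Characterization of the "type two" coaction `m ⊗ n ↦ (m₍₀₎ ⊗ n₍₀₎) ⊗ m₍₁₎ n₍₁₎`. -/
def TensorCoactCharTwo {M N : Type} [AddCommGroup M] [Module k M]
    [AddCommGroup N] [Module k N]
    (coactM : M →ₗ[k] M ⊗[k] H) (coactN : N →ₗ[k] N ⊗[k] H)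
    (coact : M ⊗[k] N →ₗ[k] (M ⊗[k] N) ⊗[k] H) : Prop :=
  ∀ (m : M) (n : N) (s t : Finset ℕ) (m₀ : ℕ → M) (m₁ : ℕ → H) (n₀ : ℕ → N) (n₁ : ℕ → H),
    coactM m = ∑ i ∈ s, m₀ i ⊗ₜ[k] m₁ i →
    coactN n = ∑ j ∈ t, n₀ j ⊗ₜ[k] n₁ j →
    coact (m ⊗ₜ[k] n) = ∑ i ∈ s, ∑ j ∈ t, (m₀ i ⊗ₜ[k] n₀ j) ⊗ₜ[k] (m₁ i * n₁ j)

/-- Characterization of the action `(h · f)(m) = f (θ(h) · m)` on the dual space. -/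
def DualActChar (θ : H → H) {M : Type} [AddCommGroup M] [Module k M]
    (actM : H →ₗ[k] M →ₗ[k] M)
    (actD : H →ₗ[k] Module.Dual k M →ₗ[k] Module.Dual k M) : Prop :=
  ∀ (h : H) (f : Module.Dual k M) (m : M), actD h f m = f (actM (θ h) m)

/-- Characterization of the coaction `f₍₀₎(m) ⊗ f₍₁₎ = f(m₍₀₎) ⊗ σ(m₍₁₎)` on the dual space
(expressed through contraction against evaluation at each `m`). -/
def DualCoactChar (σ : H → H) {M : Type} [AddCommGroup M] [Module k M]
    (coactM : M →ₗ[k] M ⊗[k] H)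
    (coactD : Module.Dual k M →ₗ[k] Module.Dual k M ⊗[k] H) : Prop :=
  ∀ (f : Module.Dual k M) (m : M) (t : Finset ℕ) (m₀ : ℕ → M) (m₁ : ℕ → H),
    coactM m = ∑ j ∈ t, m₀ j ⊗ₜ[k] m₁ j →
    TensorProduct.lid k H (LinearMap.rTensor H (Module.Dual.eval k M m) (coactD f))
      = ∑ j ∈ t, f (m₀ j) • σ (m₁ j)

/-- Characterization of the action `(h · u)(m) = θ(h₁) · u (θ(S(h₂)) · m)` on `End(M)`. -/
def EndActChar (θ : H → H) {M : Type} [AddCommGroup M] [Module k M]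
    (actM : H →ₗ[k] M →ₗ[k] M)
    (actE : H →ₗ[k] Module.End k M →ₗ[k] Module.End k M) : Prop :=
  ∀ (h : H) (u : Module.End k M) (m : M) (s : Finset ℕ) (p q : ℕ → H),
    Coalgebra.comul (R := k) h = ∑ i ∈ s, p i ⊗ₜ[k] q i →
    actE h u m = ∑ i ∈ s,
      actM (θ (p i)) (u (actM (θ (HopfAlgebra.antipode (R := k) (q i))) m))

/-- Characterization of the coaction `u₍₀₎(m) ⊗ u₍₁₎ = u(m₍₀₎)₍₀₎ ⊗ Sinv(m₍₁₎) u(m₍₀₎)₍₁₎`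
on `End(M)`, expressed through contraction against evaluation at each `m`. -/
def EndCoactChar (Sinv : H → H) {M : Type} [AddCommGroup M] [Module k M]
    (coactM : M →ₗ[k] M ⊗[k] H)
    (coactE : Module.End k M →ₗ[k] Module.End k M ⊗[k] H) : Prop :=
  ∀ (u : Module.End k M) (m : M) (t : Finset ℕ) (m₀ : ℕ → M) (m₁ : ℕ → H)
    (r : ℕ → Finset ℕ) (n₀ : ℕ → ℕ → M) (n₁ : ℕ → ℕ → H),
    coactM m = ∑ j ∈ t, m₀ j ⊗ₜ[k] m₁ j →
    (∀ j ∈ t, coactM (u (m₀ j)) = ∑ l ∈ r j, n₀ j l ⊗ₜ[k] n₁ j l) →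
    LinearMap.rTensor H (LinearMap.applyₗ (R := k) m) (coactE u)
      = ∑ j ∈ t, ∑ l ∈ r j, n₀ j l ⊗ₜ[k] (Sinv (m₁ j) * n₁ j l)

/-- Characterization of the action `(h · u)(m) = θ(h₂) · u (θ(Sinv(h₁)) · m)` on `End(M)ᵒᵖ`. -/
def EndOpActChar (θ Sinv : H → H) {M : Type} [AddCommGroup M] [Module k M]
    (actM : H →ₗ[k] M →ₗ[k] M)
    (actE : H →ₗ[k] (Module.End k M)ᵐᵒᵖ →ₗ[k] (Module.End k M)ᵐᵒᵖ) : Prop :=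
  ∀ (h : H) (u : (Module.End k M)ᵐᵒᵖ) (m : M) (s : Finset ℕ) (p q : ℕ → H),
    Coalgebra.comul (R := k) h = ∑ i ∈ s, p i ⊗ₜ[k] q i →
    (actE h u).unop m = ∑ i ∈ s,
      actM (θ (q i)) (u.unop (actM (θ (Sinv (p i))) m))

/-- Characterization of the coaction `u₍₀₎(m) ⊗ u₍₁₎ = u(m₍₀₎)₍₀₎ ⊗ u(m₍₀₎)₍₁₎ S(m₍₁₎)`
on `End(M)ᵒᵖ`, expressed through contraction against evaluation at each `m`. -/
def EndOpCoactChar {M : Type} [AddCommGroup M] [Module k M]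
    (coactM : M →ₗ[k] M ⊗[k] H)
    (coactE : (Module.End k M)ᵐᵒᵖ →ₗ[k] (Module.End k M)ᵐᵒᵖ ⊗[k] H) : Prop :=
  ∀ (u : (Module.End k M)ᵐᵒᵖ) (m : M) (t : Finset ℕ) (m₀ : ℕ → M) (m₁ : ℕ → H)
    (r : ℕ → Finset ℕ) (n₀ : ℕ → ℕ → M) (n₁ : ℕ → ℕ → H),
    coactM m = ∑ j ∈ t, m₀ j ⊗ₜ[k] m₁ j →
    (∀ j ∈ t, coactM (u.unop (m₀ j)) = ∑ l ∈ r j, n₀ j l ⊗ₜ[k] n₁ j l) →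
    LinearMap.rTensor H ((LinearMap.applyₗ (R := k) m).comp
        (MulOpposite.opLinearEquiv k).symm.toLinearMap) (coactE u)
      = ∑ j ∈ t, ∑ l ∈ r j,
          n₀ j l ⊗ₜ[k] (n₁ j l * HopfAlgebra.antipode (R := k) (m₁ j))

/-- `A`, with the Yetter-Drinfeld structure `(act, coact)`, is an algebra in the braided
category of Yetter-Drinfeld modules over `H`. -/
def IsYDAlgebra (Sinv : H → H) {A : Type} [Ring A] [Algebra k A]
    (act : H →ₗ[k] A →ₗ[k] A) (coact : A →ₗ[k] A ⊗[k] H) : Prop :=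
  IsYD k H Sinv id id act coact ∧
  (∀ (h : H) (a b : A) (s : Finset ℕ) (p q : ℕ → H),
    Coalgebra.comul (R := k) h = ∑ i ∈ s, p i ⊗ₜ[k] q i →
    act h (a * b) = ∑ i ∈ s, act (p i) a * act (q i) b) ∧
  (∀ h : H, act h 1 = Coalgebra.counit (R := k) h • (1 : A)) ∧
  (coact 1 = (1 : A) ⊗ₜ[k] (1 : H)) ∧
  (∀ (a b : A) (s t : Finset ℕ) (a₀ : ℕ → A) (a₁ : ℕ → H) (b₀ : ℕ → A) (b₁ : ℕ → H),
    coact a = ∑ i ∈ s, a₀ i ⊗ₜ[k] a₁ i →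
    coact b = ∑ j ∈ t, b₀ j ⊗ₜ[k] b₁ j →
    coact (a * b) = ∑ i ∈ s, ∑ j ∈ t, (a₀ i * b₀ j) ⊗ₜ[k] (b₁ j * a₁ i))

/-- Characterization of the smash product multiplication
`(a # b)(a' # b') = a a'₍₀₎ # (a'₍₁₎ · b) b'` on `A ⊗ B`. -/
def SmashMulChar {A B : Type} [Ring A] [Algebra k A] [Ring B] [Algebra k B]
    (actB : H →ₗ[k] B →ₗ[k] B) (coactA : A →ₗ[k] A ⊗[k] H)
    (mul : (A ⊗[k] B) →ₗ[k] (A ⊗[k] B) →ₗ[k] (A ⊗[k] B)) : Prop :=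
  ∀ (a a' : A) (b b' : B) (t : Finset ℕ) (a₀ : ℕ → A) (a₁ : ℕ → H),
    coactA a' = ∑ j ∈ t, a₀ j ⊗ₜ[k] a₁ j →
    mul (a ⊗ₜ[k] b) (a' ⊗ₜ[k] b') = ∑ j ∈ t, (a * a₀ j) ⊗ₜ[k] (actB (a₁ j) b * b')

end GYD

lemma exists_nat_rep {k : Type} [Field k] {A B : Type} [AddCommGroup A] [Module k A]
    [AddCommGroup B] [Module k B] (x : A ⊗[k] B) :
    ∃ (s : Finset ℕ) (p : ℕ → A) (q : ℕ → B), x = ∑ i ∈ s, p i ⊗ₜ[k] q i := by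
  induction x with
  | zero => exact ⟨∅, 0, 0, by simp⟩
  | tmul a b => exact ⟨{0}, fun _ => a, fun _ => b, by simp⟩
  | add x y hx hy =>
    obtain ⟨s, p, q, hx⟩ := hx
    obtain ⟨t, p', q', hy⟩ := hy
    refine ⟨s.image (fun i => 2 * i) ∪ t.image (fun i => 2 * i + 1),
      fun i => if Even i then p (i / 2) else p' (i / 2),
      fun i => if Even i then q (i / 2) else q' (i / 2), ?_⟩
    rw [Finset.sum_union, Finset.sum_image (by intro a _ b _ h; beta_reduce at h; omega),
      Finset.sum_image (by intro a _ b _ h; beta_reduce at h; omega)]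
    · rw [hx, hy]
      congr 1
      · refine Finset.sum_congr rfl fun i _ => ?_
        have he : Even (2 * i) := even_two_mul i
        have hd : (2 * i) / 2 = i := by omega
        simp only [if_pos he, hd]
      · refine Finset.sum_congr rfl fun i _ => ?_
        have he : ¬ Even (2 * i + 1) := by rw [Nat.even_iff]; omega
        have hd : (2 * i + 1) / 2 = i := by omega
        simp only [if_neg he, hd]
    · rw [Finset.disjoint_left]
      rintro a ha hb
      simp only [Finset.mem_image] at ha hb
      obtain ⟨i, _, hi⟩ := ha
      obtain ⟨j, _, hj⟩ := hb
      omega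

theorem statement_3
    (k H : Type) [Field k] [Ring H] [HopfAlgebra k H]
    (Sinv : H → H) (hS : GYD.IsAntipodeInv k H Sinv)
    (α β γ : H ≃ₗ[k] H)
    (hα : GYD.IsHopfAut k H α) (hβ : GYD.IsHopfAut k H β) (hγ : GYD.IsHopfAut k H γ)
    (M N : Type) [AddCommGroup M] [Module k M] [AddCommGroup N] [Module k N]
    (actM : H →ₗ[k] M →ₗ[k] M) (coactM : M →ₗ[k] M ⊗[k] H)
    (actN : H →ₗ[k] N →ₗ[k] N) (coactN : N →ₗ[k] N ⊗[k] H)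
    (hM : GYD.IsYD k H Sinv ⇑α ⇑β actM coactM)
    (hN : GYD.IsYD k H Sinv ⇑β ⇑γ actN coactN)
    (act₁ : H →ₗ[k] (M ⊗[k] N) →ₗ[k] (M ⊗[k] N))
    (coact₁ : M ⊗[k] N →ₗ[k] (M ⊗[k] N) ⊗[k] H)
    (hact₁ : GYD.TensorActChar k H id id actM actN act₁)
    (hcoact₁ : GYD.TensorCoactChar k H coactM coactN coact₁)
    (actHat : H →ₗ[k] (M ⊗[k] N) →ₗ[k] (M ⊗[k] N))
    (coactHat : M ⊗[k] N →ₗ[k] (M ⊗[k] N) ⊗[k] H)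
    (hactHat : GYD.TensorActChar k H ⇑β ⇑β actM actN actHat)
    (hcoactHat : GYD.TensorCoactChar k H coactM coactN coactHat) :
    act₁ = actHat ∘ₗ β.symm.toLinearMap ∧ coact₁ = coactHat := by
  constructor
  · refine LinearMap.ext fun h => TensorProduct.ext' fun m n => ?_
    obtain ⟨s, p, q, hpq⟩ := exists_nat_rep (Coalgebra.comul (R := k) h)
    have h1 := hact₁ h m n s p q hpq
    have hmap := hβ.2.2.1 (β.symm h)
    rw [β.apply_symm_apply, hpq] at hmap
    have hc : Coalgebra.comul (R := k) (β.symm h)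
        = ∑ i ∈ s, β.symm (p i) ⊗ₜ[k] β.symm (q i) := by
      apply (TensorProduct.congr β β).injective
      rw [map_sum]
      simp only [TensorProduct.congr_tmul, LinearEquiv.apply_symm_apply]
      rw [hmap]
      rfl
    have h2 := hactHat (β.symm h) m n s (fun i => β.symm (p i)) (fun i => β.symm (q i)) hc
    simp only [LinearEquiv.apply_symm_apply] at h2
    simp only [LinearMap.comp_apply, LinearEquiv.coe_coe]
    rw [h1, h2]
    simp
  · refine TensorProduct.ext' fun m n => ?_
    obtain ⟨t, m₀, m₁, hm⟩ := exists_nat_rep (coactM m)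
    obtain ⟨r, n₀, n₁, hn⟩ := exists_nat_rep (coactN n)
    rw [hcoact₁ m n t r m₀ m₁ n₀ n₁ hm hn, hcoactHat m n t r m₀ m₁ n₀ n₁ hm hn]

end
end

section
/- Let M be a finite-dimensional (α,β)-Yetter-Drinfeld module. Then M^◇ = F(M*) and ◇M = F(*M), where F is the functor from _H𝒴𝒟^H(β(β⁻¹α⁻¹), α(β⁻¹α⁻¹)) = _H𝒴𝒟^H(α⁻¹, αβ⁻¹α⁻¹) to _H𝒴𝒟^H(β, α) with twisting automorphism β⁻¹α⁻¹; concretely, M^◇ coincides with M* as a right H-comodule and its action is h → f = (αβ)(h)·f where · is the action of M*, and similarly ◇M coincides with *M with action h → f = (αβ)(h)·f. -/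
open TensorProduct

noncomputable section

namespace GYDProof

open TensorProduct

variable {k H : Type} [Field k] [Ring H] [HopfAlgebra k H]

lemma antipode_hopfAut (φ : H ≃ₗ[k] H) (hφ : GYD.IsHopfAut k H φ) (h : H) :
    HopfAlgebra.antipode (R := k) (φ h) = φ (HopfAlgebra.antipode (R := k) h) := by
  classical
  obtain ⟨hmul, hone, hcomul, hcounit⟩ := hφ
  set S : H →ₗ[k] H := HopfAlgebra.antipode (R := k) with hSdef
  set r : Coalgebra.Repr k h (H × H) := Coalgebra.Repr.arbitrary k h with hr
  set r₁ : (i : H × H) → Coalgebra.Repr k (r.left i) (H × H) :=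
    fun i => Coalgebra.Repr.arbitrary k (r.left i) with hr₁
  set r₂ : (i : H × H) → Coalgebra.Repr k (r.right i) (H × H) :=
    fun i => Coalgebra.Repr.arbitrary k (r.right i) with hr₂
  have key := Coalgebra.sum_map_tmul_tmul_eq (R := k)
    (S ∘ₗ φ.toLinearMap) (φ.toLinearMap) (φ.toLinearMap ∘ₗ S) h
    (repr := r) (a₁ := r₁) (a₂ := r₂)
  set ψ : H ⊗[k] (H ⊗[k] H) →ₗ[k] H :=
    LinearMap.mul' k H ∘ₗ LinearMap.lTensor H (LinearMap.mul' k H) with hψdef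
  have hψ : ∀ x y z : H, ψ (x ⊗ₜ[k] (y ⊗ₜ[k] z)) = x * (y * z) := by
    intro x y z; simp [hψdef]
  have key2 := congrArg ψ key
  simp only [map_sum, hψ, LinearMap.comp_apply, LinearEquiv.coe_coe] at key2
  -- compute the left side
  have hinner : ∀ i, ∑ j ∈ (r₂ i).index,
      φ ((r₂ i).left j) * φ (S ((r₂ i).right j))
        = Coalgebra.counit (R := k) (r.right i) • (1 : H) := by
    intro i
    calc ∑ j ∈ (r₂ i).index, φ ((r₂ i).left j) * φ (S ((r₂ i).right j))
        = φ (∑ j ∈ (r₂ i).index, (r₂ i).left j * S ((r₂ i).right j)) := by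
          rw [map_sum]; exact Finset.sum_congr rfl fun j _ => (hmul _ _).symm
      _ = φ (Coalgebra.counit (R := k) (r.right i) • (1 : H)) := by
          rw [HopfAlgebra.sum_mul_antipode_eq_smul (r₂ i)]
      _ = Coalgebra.counit (R := k) (r.right i) • (1 : H) := by rw [map_smul, hone]
  have hL : ∑ i ∈ r.index, ∑ j ∈ (r₂ i).index,
      S (φ (r.left i)) * (φ ((r₂ i).left j) * φ (S ((r₂ i).right j))) = S (φ h) := by
    have hh : ∑ i ∈ r.index, Coalgebra.counit (R := k) (r.right i) • r.left i = h := by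
      have e2 := congrArg (TensorProduct.rid k H) (Coalgebra.sum_tmul_counit_eq (R := k) r)
      rw [map_sum] at e2
      simp only [TensorProduct.rid_tmul, one_smul] at e2
      exact e2
    calc ∑ i ∈ r.index, ∑ j ∈ (r₂ i).index,
        S (φ (r.left i)) * (φ ((r₂ i).left j) * φ (S ((r₂ i).right j)))
        = ∑ i ∈ r.index, S (φ (r.left i)) *
            (∑ j ∈ (r₂ i).index, φ ((r₂ i).left j) * φ (S ((r₂ i).right j))) := by
            simp [Finset.mul_sum]
      _ = ∑ i ∈ r.index, Coalgebra.counit (R := k) (r.right i) • S (φ (r.left i)) := by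
            refine Finset.sum_congr rfl fun i _ => ?_
            rw [hinner i, mul_smul_comm, mul_one]
      _ = S (φ h) := by
            have e3 : S (φ (∑ i ∈ r.index,
                Coalgebra.counit (R := k) (r.right i) • r.left i))
                = ∑ i ∈ r.index, Coalgebra.counit (R := k) (r.right i) • S (φ (r.left i)) := by
              rw [map_sum, map_sum]
              exact Finset.sum_congr rfl fun i _ => by rw [map_smul, map_smul]
            rw [hh] at e3
            exact e3.symm
  have hinner2 : ∀ i, ∑ j ∈ (r₁ i).index,
      S (φ ((r₁ i).left j)) * φ ((r₁ i).right j)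
        = Coalgebra.counit (R := k) (r.left i) • (1 : H) := by
    intro i
    have hrep : ∑ j ∈ (r₁ i).index,
        (φ ((r₁ i).left j)) ⊗ₜ[k] (φ ((r₁ i).right j))
          = CoalgebraStruct.comul (R := k) (φ (r.left i)) := by
      rw [show CoalgebraStruct.comul (R := k) (φ (r.left i))
            = Coalgebra.comul (R := k) (φ (r.left i)) from rfl,
        hcomul, ← (r₁ i).eq, map_sum]
      simp
    have := HopfAlgebra.sum_antipode_mul_eq_smul (R := k)
      (Coalgebra.Repr.mk (ι := H × H) ((r₁ i).index)
        (fun j => φ ((r₁ i).left j)) (fun j => φ ((r₁ i).right j)) hrep)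
    simpa [hcounit] using this
  have hR : ∑ i ∈ r.index, ∑ j ∈ (r₁ i).index,
      S (φ ((r₁ i).left j)) * (φ ((r₁ i).right j) * φ (S (r.right i))) = φ (S h) := by
    have hh' : ∑ i ∈ r.index, Coalgebra.counit (R := k) (r.left i) • r.right i = h := by
      have e2 := congrArg (TensorProduct.lid k H) (Coalgebra.sum_counit_tmul_eq (R := k) r)
      rw [map_sum] at e2
      simp only [TensorProduct.lid_tmul, one_smul] at e2
      exact e2
    calc ∑ i ∈ r.index, ∑ j ∈ (r₁ i).index,
        S (φ ((r₁ i).left j)) * (φ ((r₁ i).right j) * φ (S (r.right i)))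
        = ∑ i ∈ r.index,
            (∑ j ∈ (r₁ i).index, S (φ ((r₁ i).left j)) * φ ((r₁ i).right j))
              * φ (S (r.right i)) := by
            simp [Finset.sum_mul, mul_assoc]
      _ = ∑ i ∈ r.index, Coalgebra.counit (R := k) (r.left i) • φ (S (r.right i)) := by
            refine Finset.sum_congr rfl fun i _ => ?_
            rw [hinner2 i, smul_mul_assoc, one_mul]
      _ = φ (S h) := by
            have e3 : φ (S (∑ i ∈ r.index,
                Coalgebra.counit (R := k) (r.left i) • r.right i))
                = ∑ i ∈ r.index, Coalgebra.counit (R := k) (r.left i) • φ (S (r.right i)) := by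
              rw [map_sum, map_sum]
              exact Finset.sum_congr rfl fun i _ => by rw [map_smul, map_smul]
            rw [hh'] at e3
            exact e3.symm
  rw [hL, hR] at key2
  exact key2


lemma exists_nat_rep {M N : Type} [AddCommGroup M] [Module k M]
    [AddCommGroup N] [Module k N] (x : M ⊗[k] N) :
    ∃ (t : Finset ℕ) (a : ℕ → M) (b : ℕ → N), x = ∑ j ∈ t, a j ⊗ₜ[k] b j := by
  induction x using TensorProduct.induction_on with
  | zero => exact ⟨∅, 0, 0, by simp⟩
  | tmul m n => exact ⟨{0}, fun _ => m, fun _ => n, by simp⟩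
  | add x y hx hy =>
    obtain ⟨t₁, a₁, b₁, h₁⟩ := hx
    obtain ⟨t₂, a₂, b₂, h₂⟩ := hy
    refine ⟨(t₁.image fun n => 2 * n) ∪ (t₂.image fun n => 2 * n + 1),
      fun n => if n % 2 = 0 then a₁ (n / 2) else a₂ (n / 2),
      fun n => if n % 2 = 0 then b₁ (n / 2) else b₂ (n / 2), ?_⟩
    have hdisj : Disjoint (t₁.image fun n => 2 * n) (t₂.image fun n => 2 * n + 1) := by
      simp only [Finset.disjoint_left, Finset.mem_image]
      rintro x ⟨i, _, rfl⟩ ⟨j, _, hj⟩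
      omega
    rw [Finset.sum_union hdisj,
      Finset.sum_image (fun i _ j _ h => by omega),
      Finset.sum_image (fun i _ j _ h => by omega)]
    have h1 : ∀ i : ℕ, (2 * i) % 2 = 0 := fun i => by omega
    have h2 : ∀ i : ℕ, (2 * i) / 2 = i := fun i => by omega
    have h3 : ∀ i : ℕ, (2 * i + 1) % 2 = 1 := fun i => by omega
    have h4 : ∀ i : ℕ, (2 * i + 1) / 2 = i := fun i => by omega
    simp [h1, h2, h3, h4, h₁, h₂]

lemma tensor_ext {D N : Type} [AddCommGroup D] [Module k D] [FiniteDimensional k D]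
    [AddCommGroup N] [Module k N] {x y : D ⊗[k] N}
    (hxy : ∀ g : Module.Dual k D, LinearMap.rTensor N g x = LinearMap.rTensor N g y) :
    x = y := by
  classical
  set b := Module.finBasis k D
  have hsur : ∀ z : D ⊗[k] N, ∃ e : Fin (Module.finrank k D) → N,
      z = ∑ i, b i ⊗ₜ[k] e i := by
    intro z
    induction z using TensorProduct.induction_on with
    | zero => exact ⟨0, by simp⟩
    | tmul d n =>
      refine ⟨fun i => b.repr d i • n, ?_⟩
      calc d ⊗ₜ[k] n = (∑ i, b.repr d i • b i) ⊗ₜ[k] n := by rw [b.sum_repr d]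
        _ = ∑ i, b i ⊗ₜ[k] (b.repr d i • n) := by
            rw [TensorProduct.sum_tmul]
            exact Finset.sum_congr rfl fun i _ => by
              rw [TensorProduct.smul_tmul, TensorProduct.tmul_smul]
    | add u v hu hv =>
      obtain ⟨e, he⟩ := hu
      obtain ⟨e', he'⟩ := hv
      exact ⟨e + e', by simp [he, he', TensorProduct.tmul_add, Finset.sum_add_distrib]⟩
  obtain ⟨e, rfl⟩ := hsur x
  obtain ⟨e', rfl⟩ := hsur y
  suffices he : e = e' by rw [he]
  funext j
  have := congrArg (TensorProduct.lid k N) (hxy (b.coord j))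
  simpa [map_sum, TensorProduct.lid_tmul, Module.Basis.coord_apply, Module.Basis.repr_self,
    Finsupp.single_apply, ite_smul] using this

lemma coact_unique {H M : Type} [Ring H] [HopfAlgebra k H]
    [AddCommGroup M] [Module k M] [FiniteDimensional k M]
    (σ : H → H) (coactM : M →ₗ[k] M ⊗[k] H)
    (c₁ c₂ : Module.Dual k M →ₗ[k] Module.Dual k M ⊗[k] H)
    (h₁ : GYD.DualCoactChar k H σ coactM c₁)
    (h₂ : GYD.DualCoactChar k H σ coactM c₂) : c₁ = c₂ := by
  refine LinearMap.ext fun f => ?_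
  apply tensor_ext
  intro g
  obtain ⟨m, rfl⟩ : ∃ m, Module.Dual.eval k M m = g :=
    ⟨(Module.evalEquiv k M).symm g, by
      rw [← Module.evalEquiv_apply]; exact (Module.evalEquiv k M).apply_symm_apply g⟩
  obtain ⟨t, m₀, m₁, hrep⟩ := exists_nat_rep (coactM m)
  exact (TensorProduct.lid k H).injective
    ((h₁ f m t m₀ m₁ hrep).trans (h₂ f m t m₀ m₁ hrep).symm)

end GYDProof

theorem statement_5
    (k H : Type) [Field k] [Ring H] [HopfAlgebra k H]
    (Sinv : H → H) (hS : GYD.IsAntipodeInv k H Sinv)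
    (α β : H ≃ₗ[k] H)
    (hα : GYD.IsHopfAut k H α) (hβ : GYD.IsHopfAut k H β)
    (M : Type) [AddCommGroup M] [Module k M] [FiniteDimensional k M]
    (actM : H →ₗ[k] M →ₗ[k] M) (coactM : M →ₗ[k] M ⊗[k] H)
    (hM : GYD.IsYD k H Sinv ⇑α ⇑β actM coactM)
    (actD : H →ₗ[k] Module.Dual k M →ₗ[k] Module.Dual k M)
    (coactD : Module.Dual k M →ₗ[k] Module.Dual k M ⊗[k] H)
    (hactD : GYD.DualActChar k H (fun h => HopfAlgebra.antipode (R := k) h) actM actD)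
    (hcoactD : GYD.DualCoactChar k H Sinv coactM coactD)
    (actStar : H →ₗ[k] Module.Dual k M →ₗ[k] Module.Dual k M)
    (coactStar : Module.Dual k M →ₗ[k] Module.Dual k M ⊗[k] H)
    (hactStar : GYD.DualActChar k H
      (fun h => β.symm (α.symm (HopfAlgebra.antipode (R := k) h))) actM actStar)
    (hcoactStar : GYD.DualCoactChar k H Sinv coactM coactStar)
    (actD' : H →ₗ[k] Module.Dual k M →ₗ[k] Module.Dual k M)
    (coactD' : Module.Dual k M →ₗ[k] Module.Dual k M ⊗[k] H)
    (hactD' : GYD.DualActChar k H Sinv actM actD')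
    (hcoactD' : GYD.DualCoactChar k H (fun h => HopfAlgebra.antipode (R := k) h) coactM coactD')
    (actStar' : H →ₗ[k] Module.Dual k M →ₗ[k] Module.Dual k M)
    (coactStar' : Module.Dual k M →ₗ[k] Module.Dual k M ⊗[k] H)
    (hactStar' : GYD.DualActChar k H (fun h => β.symm (α.symm (Sinv h))) actM actStar')
    (hcoactStar' : GYD.DualCoactChar k H
      (fun h => HopfAlgebra.antipode (R := k) h) coactM coactStar') :
    (∀ (h : H) (f : Module.Dual k M), actD h f = actStar (α (β h)) f) ∧
    coactD = coactStar ∧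
    (∀ (h : H) (f : Module.Dual k M), actD' h f = actStar' (α (β h)) f) ∧
    coactD' = coactStar' := by
  have hSαβ : ∀ h : H,
      β.symm (α.symm (HopfAlgebra.antipode (R := k) (α (β h))))
        = HopfAlgebra.antipode (R := k) h := by
    intro h
    rw [GYDProof.antipode_hopfAut α hα, α.symm_apply_apply,
      GYDProof.antipode_hopfAut β hβ, β.symm_apply_apply]
  have hSinvAut : ∀ (φ : H ≃ₗ[k] H), GYD.IsHopfAut k H φ → ∀ h : H,
      Sinv (φ h) = φ (Sinv h) := by
    intro φ hφ h
    calc Sinv (φ h) = Sinv (HopfAlgebra.antipode (R := k) (φ (Sinv h))) := by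
          rw [GYDProof.antipode_hopfAut φ hφ, hS.1]
      _ = φ (Sinv h) := hS.2 _
  have hSinvαβ : ∀ h : H, β.symm (α.symm (Sinv (α (β h)))) = Sinv h := by
    intro h
    rw [hSinvAut α hα, α.symm_apply_apply, hSinvAut β hβ, β.symm_apply_apply]
  refine ⟨fun h f => LinearMap.ext fun m => ?_,
    GYDProof.coact_unique Sinv coactM coactD coactStar hcoactD hcoactStar,
    fun h f => LinearMap.ext fun m => ?_,
    GYDProof.coact_unique (fun h => HopfAlgebra.antipode (R := k) h) coactM coactD'
      coactStar' hcoactD' hcoactStar'⟩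
  · rw [hactD h f m, hactStar (α (β h)) f m]; beta_reduce; rw [hSαβ h]
  · rw [hactD' h f m, hactStar' (α (β h)) f m]; beta_reduce; rw [hSinvαβ h]


end
end

section
/- Let M be a finite-dimensional (α,β)-Yetter-Drinfeld module and N a finite-dimensional (γ,δ)-Yetter-Drinfeld module. Then the map Ψ : N* ⊗̂ M* → (M ⊗̂ N)*, defined by Ψ(n*⊗m*)(m⊗n) = m*(m)n*(n), is an isomorphism (a bijective H-linear and H-colinear map) of (γ⁻¹α⁻¹, αβ⁻¹γδ⁻¹γ⁻¹α⁻¹)-Yetter-Drinfeld modules. -/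
open TensorProduct

noncomputable section

namespace ConvAux

open Coalgebra

variable {R : Type} [CommRing R]

section ConvDef

variable {C A : Type} [AddCommGroup C] [Module R C] [Coalgebra R C]
  [Ring A] [Algebra R A]

/-- Convolution product. -/
def conv (f g : C →ₗ[R] A) : C →ₗ[R] A :=
  LinearMap.mul' R A ∘ₗ TensorProduct.map f g ∘ₗ Coalgebra.comul

/-- Convolution unit. -/
def convUnit : C →ₗ[R] A := Algebra.linearMap R A ∘ₗ Coalgebra.counit

lemma conv_repr (f g : C →ₗ[R] A) {c : C} {ι : Type*} (r : Coalgebra.Repr R c ι) :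
    conv f g c = ∑ i ∈ r.index, f (r.left i) * g (r.right i) := by
  simp only [conv, LinearMap.comp_apply, ← r.eq, map_sum, TensorProduct.map_tmul,
    LinearMap.mul'_apply]

lemma counit_smul_repr {c : C} {ι : Type*} (r : Coalgebra.Repr R c ι) :
    ∑ i ∈ r.index, Coalgebra.counit (R := R) (r.left i) • (r.right i) = c := by
  have := congrArg (TensorProduct.lid R C) (Coalgebra.sum_counit_tmul_eq r)
  simp only [map_sum, TensorProduct.lid_tmul, one_smul] at this
  exact this

lemma smul_counit_repr {c : C} {ι : Type*} (r : Coalgebra.Repr R c ι) :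
    ∑ i ∈ r.index, Coalgebra.counit (R := R) (r.right i) • (r.left i) = c := by
  have := congrArg (TensorProduct.rid R C) (Coalgebra.sum_tmul_counit_eq r)
  simp only [map_sum, TensorProduct.rid_tmul, one_smul] at this
  exact this

lemma convUnit_conv (f : C →ₗ[R] A) : conv convUnit f = f := by
  ext c
  rw [conv_repr _ _ (ℛ R c)]
  simp only [convUnit, LinearMap.comp_apply, Algebra.linearMap_apply]
  have : ∀ i ∈ (ℛ R c).index,
      algebraMap R A (Coalgebra.counit ((ℛ R c).left i)) * f ((ℛ R c).right i)
      = Coalgebra.counit (R := R) ((ℛ R c).left i) • f ((ℛ R c).right i) := by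
    intro i _; rw [Algebra.smul_def]
  rw [Finset.sum_congr rfl this]
  have := counit_smul_repr (ℛ R c)
  calc ∑ i ∈ (ℛ R c).index, Coalgebra.counit (R := R) ((ℛ R c).left i) • f ((ℛ R c).right i)
      = f (∑ i ∈ (ℛ R c).index, Coalgebra.counit (R := R) ((ℛ R c).left i) • ((ℛ R c).right i)) := by
        rw [map_sum]; simp
    _ = f c := by rw [this]

lemma conv_convUnit (f : C →ₗ[R] A) : conv f convUnit = f := by
  ext c
  rw [conv_repr _ _ (ℛ R c)]
  simp only [convUnit, LinearMap.comp_apply, Algebra.linearMap_apply]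
  have : ∀ i ∈ (ℛ R c).index,
      f ((ℛ R c).left i) * algebraMap R A (Coalgebra.counit ((ℛ R c).right i))
      = Coalgebra.counit (R := R) ((ℛ R c).right i) • f ((ℛ R c).left i) := by
    intro i _; rw [Algebra.smul_def, Algebra.commutes]
  rw [Finset.sum_congr rfl this]
  have := smul_counit_repr (ℛ R c)
  calc ∑ i ∈ (ℛ R c).index, Coalgebra.counit (R := R) ((ℛ R c).right i) • f ((ℛ R c).left i)
      = f (∑ i ∈ (ℛ R c).index, Coalgebra.counit (R := R) ((ℛ R c).right i) • ((ℛ R c).left i)) := by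
        rw [map_sum]; simp
    _ = f c := by rw [this]

lemma conv_assoc (f g h : C →ₗ[R] A) : conv (conv f g) h = conv f (conv g h) := by
  ext c
  set r := ℛ R c
  set a₁ : (i : r.ι) → Coalgebra.Repr R (r.left i) (C × C) := fun i => ℛ R (r.left i)
  set a₂ : (i : r.ι) → Coalgebra.Repr R (r.right i) (C × C) := fun i => ℛ R (r.right i)
  have key := Coalgebra.sum_tmul_tmul_eq r a₁ a₂
  -- apply the trilinear "f * (g * h)" map
  set T : C ⊗[R] (C ⊗[R] C) →ₗ[R] A :=
    LinearMap.mul' R A ∘ₗ TensorProduct.map f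
      (LinearMap.mul' R A ∘ₗ TensorProduct.map g h)
  have keyT := congrArg T key
  simp only [map_sum, T, LinearMap.comp_apply, TensorProduct.map_tmul,
    LinearMap.mul'_apply] at keyT
  rw [conv_repr (conv f g) h r, conv_repr f (conv g h) r]
  have l1 : ∀ i ∈ r.index, conv f g (r.left i) * h (r.right i)
      = ∑ j ∈ (a₁ i).index, f ((a₁ i).left j) * (g ((a₁ i).right j) * h (r.right i)) := by
    intro i _
    rw [conv_repr f g (a₁ i), Finset.sum_mul]
    exact Finset.sum_congr rfl fun j _ => mul_assoc _ _ _
  have l2 : ∀ i ∈ r.index, f (r.left i) * conv g h (r.right i)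
      = ∑ j ∈ (a₂ i).index, f (r.left i) * (g ((a₂ i).left j) * h ((a₂ i).right j)) := by
    intro i _
    rw [conv_repr g h (a₂ i), Finset.mul_sum]
  rw [Finset.sum_congr rfl l1, Finset.sum_congr rfl l2, keyT]

lemma conv_unique {f g g' : C →ₗ[R] A} (h1 : conv g' f = convUnit)
    (h2 : conv f g = convUnit) : g' = g := by
  have : conv g' (conv f g) = conv (conv g' f) g := (conv_assoc g' f g).symm
  rw [h1, h2, conv_convUnit, convUnit_conv] at this
  exact this

end ConvDef

section Comp

variable {C C' A A' : Type} [AddCommGroup C] [Module R C] [Coalgebra R C]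
  [AddCommGroup C'] [Module R C'] [Coalgebra R C']
  [Ring A] [Algebra R A] [Ring A'] [Algebra R A']

/-- Precomposition with a coalgebra morphism. -/
lemma conv_comp_coalgHom (f g : C →ₗ[R] A) (φ : C' →ₗ[R] C)
    (hcomul : ∀ c, Coalgebra.comul (R := R) (φ c)
      = TensorProduct.map φ φ (Coalgebra.comul (R := R) c)) :
    conv (f ∘ₗ φ) (g ∘ₗ φ) = conv f g ∘ₗ φ := by
  ext c
  simp only [conv, LinearMap.comp_apply, hcomul c]
  rw [← LinearMap.comp_apply (TensorProduct.map f g), ← TensorProduct.map_comp]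

lemma convUnit_comp_counitHom (φ : C' →ₗ[R] C)
    (hcounit : ∀ c, Coalgebra.counit (R := R) (φ c) = Coalgebra.counit (R := R) c) :
    (convUnit : C →ₗ[R] A) ∘ₗ φ = convUnit := by
  ext c; simp [convUnit, hcounit c]

/-- Postcomposition with an algebra morphism. -/
lemma algHom_comp_conv (f g : C →ₗ[R] A) (ψ : A →ₗ[R] A')
    (hmul : ∀ x y : A, ψ (x * y) = ψ x * ψ y) :
    conv (ψ ∘ₗ f) (ψ ∘ₗ g) = ψ ∘ₗ conv f g := by
  ext c
  simp only [conv, LinearMap.comp_apply]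
  set z := Coalgebra.comul (R := R) c
  induction z using TensorProduct.induction_on with
  | zero => simp
  | tmul x y => simp [hmul]
  | add x y hx hy => simp only [map_add, hx, hy]

lemma algHom_comp_convUnit (ψ : A →ₗ[R] A') (hone : ψ 1 = 1) :
    ψ ∘ₗ (convUnit : C →ₗ[R] A) = convUnit := by
  ext c
  simp only [convUnit, LinearMap.comp_apply, Algebra.linearMap_apply, Algebra.algebraMap_eq_smul_one,
    map_smul, hone]

end Comp

section Hopf

variable {H : Type} [Ring H] [HopfAlgebra R H]

local notation "S" => (HopfAlgebra.antipode (R := R) (A := H))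

lemma conv_antipode_id : conv S (LinearMap.id : H →ₗ[R] H) = convUnit := by
  ext c
  have := HopfAlgebra.mul_antipode_rTensor_comul_apply (R := R) (a := c)
  simpa [conv, convUnit, LinearMap.rTensor] using this

lemma conv_id_antipode : conv (LinearMap.id : H →ₗ[R] H) S = convUnit := by
  ext c
  have := HopfAlgebra.mul_antipode_lTensor_comul_apply (R := R) (a := c)
  simpa [conv, convUnit, LinearMap.lTensor] using this

/-- The antipode commutes with any linear map that is both an algebra and a coalgebra
morphism (in particular with Hopf algebra automorphisms). -/
theorem antipode_comp_hopfHom (φ : H →ₗ[R] H)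
    (hmul : ∀ x y : H, φ (x * y) = φ x * φ y) (hone : φ 1 = 1)
    (hcomul : ∀ c, Coalgebra.comul (R := R) (φ c)
      = TensorProduct.map φ φ (Coalgebra.comul (R := R) c))
    (hcounit : ∀ c, Coalgebra.counit (R := R) (φ c) = Coalgebra.counit (R := R) c)
    (h : H) : S (φ h) = φ (S h) := by
  have h1 : conv (S ∘ₗ φ) φ = convUnit := by
    have : conv (S ∘ₗ φ) (LinearMap.id ∘ₗ φ) = conv S LinearMap.id ∘ₗ φ :=
      conv_comp_coalgHom _ _ φ hcomul
    simpa [conv_antipode_id, convUnit_comp_counitHom φ hcounit] using this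
  have h2 : conv φ (φ ∘ₗ S) = convUnit := by
    have : conv (φ ∘ₗ LinearMap.id) (φ ∘ₗ S) = φ ∘ₗ conv LinearMap.id S :=
      algHom_comp_conv _ _ φ hmul
    simpa [conv_id_antipode, algHom_comp_convUnit φ hone] using this
  have := conv_unique h1 h2
  exact DFunLike.congr_fun this h

/-- A `Repr` for a pure tensor in the tensor-product coalgebra. -/
def tmulRepr {x y : H} {ι κ : Type*} (rx : Coalgebra.Repr R x ι) (ry : Coalgebra.Repr R y κ) :
    Coalgebra.Repr R (x ⊗ₜ[R] y) (ι × κ) where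
  index := rx.index ×ˢ ry.index
  left := fun p => rx.left p.1 ⊗ₜ[R] ry.left p.2
  right := fun p => rx.right p.1 ⊗ₜ[R] ry.right p.2
  eq := by
    show _ = Coalgebra.comul (R := R) (x ⊗ₜ[R] y)
    rw [TensorProduct.comul_def]
    simp only [LinearMap.comp_apply, TensorProduct.map_tmul, TensorProduct.AlgebraTensorModule.map_tmul]
    rw [← rx.eq, ← ry.eq, TensorProduct.sum_tmul]
    simp only [TensorProduct.tmul_sum, map_sum]
    rw [Finset.sum_product]
    exact Finset.sum_congr rfl fun i _ => Finset.sum_congr rfl fun j _ => by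
      simp [TensorProduct.tensorTensorTensorComm_tmul]

@[simp] lemma tmulRepr_index {x y : H} {ι κ : Type*} (rx : Coalgebra.Repr R x ι) (ry : Coalgebra.Repr R y κ) :
    (tmulRepr rx ry).index = rx.index ×ˢ ry.index := rfl

@[simp] lemma tmulRepr_left {x y : H} {ι κ : Type*} (rx : Coalgebra.Repr R x ι) (ry : Coalgebra.Repr R y κ)
    (p : ι × κ) : (tmulRepr rx ry).left p = rx.left p.1 ⊗ₜ[R] ry.left p.2 := rfl

@[simp] lemma tmulRepr_right {x y : H} {ι κ : Type*} (rx : Coalgebra.Repr R x ι) (ry : Coalgebra.Repr R y κ)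
    (p : ι × κ) : (tmulRepr rx ry).right p = rx.right p.1 ⊗ₜ[R] ry.right p.2 := rfl

lemma counit_tmul (x y : H) :
    Coalgebra.counit (R := R) (x ⊗ₜ[R] y)
      = Coalgebra.counit (R := R) x * Coalgebra.counit (R := R) y := by
  rw [TensorProduct.counit_tmul]
  simp [mul_comm]

theorem antipode_mul (x y : H) : S (x * y) = S y * S x := by
  set μ : H ⊗[R] H →ₗ[R] H := LinearMap.mul' R H with hμ
  set Q : H ⊗[R] H →ₗ[R] H :=
    μ ∘ₗ TensorProduct.map S S ∘ₗ (TensorProduct.comm R H H).toLinearMap with hQ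
  have hQapp : ∀ a b : H, Q (a ⊗ₜ[R] b) = S b * S a := by intro a b; simp [hQ, hμ]
  have hμcomul : ∀ z : H ⊗[R] H, Coalgebra.comul (R := R) (μ z)
      = TensorProduct.map μ μ (Coalgebra.comul (R := R) z) := by
    intro z
    induction z using TensorProduct.induction_on with
    | zero => simp
    | add u v hu hv => simp only [map_add, hu, hv]
    | tmul a b =>
      simp only [hμ, LinearMap.mul'_apply, Bialgebra.comul_mul]
      rw [TensorProduct.comul_def]
      simp only [LinearMap.comp_apply, TensorProduct.map_tmul, TensorProduct.AlgebraTensorModule.map_tmul]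
      set u := Coalgebra.comul (R := R) a
      set v := Coalgebra.comul (R := R) b
      clear_value u v
      induction u using TensorProduct.induction_on with
      | zero => simp
      | add u₁ u₂ h1 h2 => simp only [map_add, TensorProduct.add_tmul, add_mul, h1, h2]
      | tmul p q =>
        induction v using TensorProduct.induction_on with
        | zero => simp
        | add v₁ v₂ h1 h2 => simp only [map_add, TensorProduct.tmul_add, mul_add, h1, h2]
        | tmul w z =>
          simp [Algebra.TensorProduct.tmul_mul_tmul]
  have hμcounit : ∀ z : H ⊗[R] H, Coalgebra.counit (R := R) (μ z)
      = Coalgebra.counit (R := R) z := by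
    intro z
    induction z using TensorProduct.induction_on with
    | zero => simp
    | add u v hu hv => simp only [map_add, hu, hv]
    | tmul a b => simp [hμ, counit_tmul, mul_comm]
  have h2 : conv μ (S ∘ₗ μ) = convUnit := by
    have : conv (LinearMap.id ∘ₗ μ) (S ∘ₗ μ) = conv LinearMap.id S ∘ₗ μ :=
      conv_comp_coalgHom _ _ μ hμcomul
    simpa [conv_id_antipode, convUnit_comp_counitHom μ hμcounit] using this
  have h1 : conv Q μ = convUnit := by
    apply TensorProduct.ext'
    intro x y
    set rx := ℛ R x
    set ry := ℛ R y
    rw [conv_repr _ _ (tmulRepr rx ry)]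
    simp only [tmulRepr_index, tmulRepr_left, tmulRepr_right]
    have : ∀ p ∈ rx.index ×ˢ ry.index,
        Q (rx.left p.1 ⊗ₜ[R] ry.left p.2) * μ (rx.right p.1 ⊗ₜ[R] ry.right p.2)
        = S (ry.left p.2) * ((S (rx.left p.1) * rx.right p.1) * ry.right p.2) := by
      intro p _
      rw [hQapp]
      simp only [hμ, LinearMap.mul'_apply]
      rw [mul_assoc, ← mul_assoc (S (rx.left p.1))]
    refine (Finset.sum_congr rfl this).trans ?_
    rw [Finset.sum_product_right]
    have inner : ∀ j ∈ ry.index, ∑ i ∈ rx.index,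
        S (ry.left j) * ((S (rx.left i) * rx.right i) * ry.right j)
        = Coalgebra.counit (R := R) x • (S (ry.left j) * ry.right j) := by
      intro j _
      rw [← Finset.mul_sum, ← Finset.sum_mul, HopfAlgebra.sum_antipode_mul_eq_algebraMap_counit rx,
        ← Algebra.smul_def, mul_smul_comm]
    refine (Finset.sum_congr rfl inner).trans ?_
    rw [← Finset.smul_sum, HopfAlgebra.sum_antipode_mul_eq_algebraMap_counit ry]
    show _ = convUnit (x ⊗ₜ[R] y)
    simp only [convUnit, LinearMap.comp_apply, Algebra.linearMap_apply, counit_tmul, map_mul]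
    rw [Algebra.smul_def]
  have := conv_unique h1 h2
  have := DFunLike.congr_fun this (x ⊗ₜ[R] y)
  rw [hQapp] at this
  simpa [hμ, LinearMap.mul'_apply] using this.symm

/-- The antipode is an anti-coalgebra morphism. -/
theorem comul_antipode (c : H) :
    Coalgebra.comul (R := R) (S c)
      = (TensorProduct.comm R H H) (TensorProduct.map S S (Coalgebra.comul (R := R) c)) := by
  set Δ : H →ₗ[R] H ⊗[R] H := Coalgebra.comul (R := R) with hΔ
  set W : H →ₗ[R] H ⊗[R] H :=
    (TensorProduct.comm R H H).toLinearMap ∘ₗ TensorProduct.map S S ∘ₗ Δ with hW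
  have h2 : conv Δ (Δ ∘ₗ S) = convUnit := by
    have : conv (Δ ∘ₗ LinearMap.id) (Δ ∘ₗ S) = Δ ∘ₗ conv LinearMap.id S :=
      algHom_comp_conv _ _ Δ (fun a b => Bialgebra.comul_mul a b)
    simpa [conv_id_antipode, algHom_comp_convUnit Δ Bialgebra.comul_one] using this
  have h1 : conv W Δ = convUnit := by
    ext c
    set r := ℛ R c with hr
    rw [conv_repr _ _ r]
    set rL : (i : r.ι) → Coalgebra.Repr R (r.left i) (H × H) := fun i => ℛ R (r.left i) with hrL
    set rR : (i : r.ι) → Coalgebra.Repr R (r.right i) (H × H) := fun i => ℛ R (r.right i) with hrR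
    set Ξ : H ⊗[R] (H ⊗[R] H) →ₗ[R] H ⊗[R] H :=
      LinearMap.mul' R (H ⊗[R] H) ∘ₗ
        TensorProduct.map ((TensorProduct.comm R H H).toLinearMap ∘ₗ TensorProduct.map S S) Δ ∘ₗ
        (TensorProduct.assoc R H H H).symm.toLinearMap with hΞ
    have hΞapp : ∀ (p q z : H), Ξ (p ⊗ₜ[R] (q ⊗ₜ[R] z)) = (S q ⊗ₜ[R] S p) * Δ z := by
      intro p q z
      simp [hΞ, LinearMap.mul'_apply]
    have e1 : ∀ i ∈ r.index, W (r.left i) * Δ (r.right i)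
        = ∑ j ∈ (rL i).index, Ξ ((rL i).left j ⊗ₜ[R] ((rL i).right j ⊗ₜ[R] r.right i)) := by
      intro i _
      have : W (r.left i)
          = ∑ j ∈ (rL i).index, S ((rL i).right j) ⊗ₜ[R] S ((rL i).left j) := by
        simp only [hW, LinearMap.comp_apply]
        rw [show Δ (r.left i) = Coalgebra.comul (R := R) (r.left i) from rfl, ← (rL i).eq]
        simp [map_sum]
      rw [this, Finset.sum_mul]
      exact Finset.sum_congr rfl fun j _ => (hΞapp _ _ _).symm
    refine (Finset.sum_congr rfl e1).trans ?_
    have key := Coalgebra.sum_tmul_tmul_eq r rL rR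
    have keyΞ := congrArg Ξ key
    simp only [map_sum] at keyΞ
    rw [keyΞ]
    -- now expand each Ξ (r.left i ⊗ ((rR i).left l ⊗ (rR i).right l))
    have e2 : ∀ i ∈ r.index, ∑ l ∈ (rR i).index,
        Ξ (r.left i ⊗ₜ[R] ((rR i).left l ⊗ₜ[R] (rR i).right l))
        = (1 : H) ⊗ₜ[R] (S (r.left i) * r.right i) := by
      intro i _
      set Θ : H ⊗[R] (H ⊗[R] H) →ₗ[R] H ⊗[R] H :=
        TensorProduct.map (LinearMap.mul' R H ∘ₗ TensorProduct.map S LinearMap.id)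
            (LinearMap.mulLeft R (S (r.left i))) ∘ₗ
          (TensorProduct.assoc R H H H).symm.toLinearMap with hΘ
      have hΘapp : ∀ (x y z : H), Θ (x ⊗ₜ[R] (y ⊗ₜ[R] z))
          = (S x * y) ⊗ₜ[R] (S (r.left i) * z) := by
        intro x y z
        simp [hΘ, LinearMap.mul'_apply]
      set u : (l : (rR i).ι) → Coalgebra.Repr R ((rR i).left l) (H × H) := fun l => ℛ R ((rR i).left l)
      set v : (l : (rR i).ι) → Coalgebra.Repr R ((rR i).right l) (H × H) := fun l => ℛ R ((rR i).right l)
      have step1 : ∀ l ∈ (rR i).index,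
          Ξ (r.left i ⊗ₜ[R] ((rR i).left l ⊗ₜ[R] (rR i).right l))
          = ∑ m ∈ (v l).index, Θ ((rR i).left l ⊗ₜ[R] ((v l).left m ⊗ₜ[R] (v l).right m)) := by
        intro l _
        rw [hΞapp]
        have : Δ ((rR i).right l) = ∑ m ∈ (v l).index, (v l).left m ⊗ₜ[R] (v l).right m :=
          ((v l).eq).symm
        rw [this, Finset.mul_sum]
        refine Finset.sum_congr rfl fun m _ => ?_
        rw [hΘapp, Algebra.TensorProduct.tmul_mul_tmul]
      refine (Finset.sum_congr rfl step1).trans ?_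
      have key2 := Coalgebra.sum_tmul_tmul_eq (rR i) u v
      have key2Θ := congrArg Θ key2.symm
      simp only [map_sum] at key2Θ
      rw [key2Θ]
      have step2 : ∀ l ∈ (rR i).index, ∑ m ∈ (u l).index,
          Θ ((u l).left m ⊗ₜ[R] ((u l).right m ⊗ₜ[R] (rR i).right l))
          = Coalgebra.counit (R := R) ((rR i).left l)
              • ((1:H) ⊗ₜ[R] (S (r.left i) * (rR i).right l)) := by
        intro l _
        have : ∀ m ∈ (u l).index, Θ ((u l).left m ⊗ₜ[R] ((u l).right m ⊗ₜ[R] (rR i).right l))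
            = (S ((u l).left m) * (u l).right m) ⊗ₜ[R] (S (r.left i) * (rR i).right l) := by
          intro m _; rw [hΘapp]
        refine (Finset.sum_congr rfl this).trans ?_
        rw [← TensorProduct.sum_tmul, HopfAlgebra.sum_antipode_mul_eq_algebraMap_counit (u l),
          Algebra.algebraMap_eq_smul_one, TensorProduct.smul_tmul']
      refine (Finset.sum_congr rfl step2).trans ?_
      have step3 : ∀ l ∈ (rR i).index,
          Coalgebra.counit (R := R) ((rR i).left l)
              • ((1:H) ⊗ₜ[R] (S (r.left i) * (rR i).right l))
          = (1:H) ⊗ₜ[R] (S (r.left i)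
              * (Coalgebra.counit (R := R) ((rR i).left l) • (rR i).right l)) := by
        intro l _
        rw [← TensorProduct.tmul_smul, ← mul_smul_comm]
      refine (Finset.sum_congr rfl step3).trans ?_
      rw [← TensorProduct.tmul_sum, ← Finset.mul_sum, counit_smul_repr (rR i)]
    refine (Finset.sum_congr rfl e2).trans ?_
    rw [← TensorProduct.tmul_sum, HopfAlgebra.sum_antipode_mul_eq_algebraMap_counit r]
    show _ = convUnit c
    simp [convUnit, Algebra.TensorProduct.one_def, Algebra.algebraMap_eq_smul_one,
      TensorProduct.smul_tmul]
  have := conv_unique h1 h2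
  have := DFunLike.congr_fun this c
  simpa [hW] using this.symm

theorem antipode_one : S (1 : H) = 1 := by
  have := HopfAlgebra.mul_antipode_rTensor_comul_apply (R := R) (a := (1 : H))
  rw [Bialgebra.comul_one] at this
  simpa [Algebra.TensorProduct.one_def] using this

end Hopf

end ConvAux

namespace GYDAux

open GYD

variable {k H : Type} [Field k] [Ring H] [HopfAlgebra k H]

local notation "S" => (HopfAlgebra.antipode (R := k) (A := H))

lemma exists_nat_repr {M N : Type} [AddCommGroup M] [Module k M] [AddCommGroup N] [Module k N]
    (x : M ⊗[k] N) :
    ∃ (s : Finset ℕ) (a : ℕ → M) (b : ℕ → N), x = ∑ i ∈ s, a i ⊗ₜ[k] b i := by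
  induction x using TensorProduct.induction_on with
  | zero => exact ⟨∅, fun _ => 0, fun _ => 0, by simp⟩
  | tmul m n => exact ⟨{0}, fun _ => m, fun _ => n, by simp⟩
  | add x y hx hy =>
    obtain ⟨s, a, b, hs⟩ := hx
    obtain ⟨t, c, d, ht⟩ := hy
    refine ⟨s.image (fun i => 2 * i) ∪ t.image (fun i => 2 * i + 1),
      fun i => if i % 2 = 0 then a (i / 2) else c (i / 2),
      fun i => if i % 2 = 0 then b (i / 2) else d (i / 2), ?_⟩
    have hdisj : Disjoint (s.image (fun i => 2 * i)) (t.image (fun i => 2 * i + 1)) := by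
      simp only [Finset.disjoint_left, Finset.mem_image]
      rintro x ⟨i, _, rfl⟩ ⟨j, _, hj⟩
      omega
    rw [Finset.sum_union hdisj, Finset.sum_image (by intro a _ b _ h; beta_reduce at h; omega),
      Finset.sum_image (by intro a _ b _ h; beta_reduce at h; omega), hs, ht]
    congr 1
    · refine Finset.sum_congr rfl fun i _ => ?_
      have h1 : (2 * i) % 2 = 0 := by omega
      have h2 : (2 * i) / 2 = i := by omega
      simp [h1, h2]
    · exact Finset.sum_congr rfl fun i _ => by
        have h1 : (2 * i + 1) % 2 = 1 := by omega
        have h2 : (2 * i + 1) / 2 = i := by omega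
        simp [h1, h2]

lemma hopfAut_symm {φ : H ≃ₗ[k] H} (hφ : IsHopfAut k H φ) : IsHopfAut k H φ.symm := by
  obtain ⟨hmul, hone, hcomul, hcounit⟩ := hφ
  refine ⟨?_, ?_, ?_, ?_⟩
  · intro x y
    apply φ.injective
    rw [hmul, φ.apply_symm_apply, φ.apply_symm_apply, φ.apply_symm_apply]
  · apply φ.injective
    rw [hone, φ.apply_symm_apply]
  · intro h
    have h1 := hcomul (φ.symm h)
    rw [φ.apply_symm_apply] at h1
    have cancel : ∀ z : H ⊗[k] H,
        TensorProduct.map φ.symm.toLinearMap φ.symm.toLinearMap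
          (TensorProduct.map φ.toLinearMap φ.toLinearMap z) = z := by
      intro z
      induction z using TensorProduct.induction_on with
      | zero => simp
      | tmul a b => simp
      | add a b ha hb => simp only [map_add, ha, hb]
    have h2 := congrArg (TensorProduct.map φ.symm.toLinearMap φ.symm.toLinearMap) h1
    rw [cancel] at h2
    exact h2.symm
  · intro h
    have h1 := hcounit (φ.symm h)
    rw [φ.apply_symm_apply] at h1
    exact h1.symm

lemma aut_antipode_comm {φ : H ≃ₗ[k] H} (hφ : IsHopfAut k H φ) (h : H) :
    S (φ h) = φ (S h) :=
  ConvAux.antipode_comp_hopfHom φ.toLinearMap hφ.1 hφ.2.1 hφ.2.2.1 hφ.2.2.2 h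

lemma comul_aut_repr {φ : H ≃ₗ[k] H} (hφ : IsHopfAut k H φ) {h : H} {s : Finset ℕ}
    {p q : ℕ → H} (hr : Coalgebra.comul (R := k) h = ∑ i ∈ s, p i ⊗ₜ[k] q i) :
    Coalgebra.comul (R := k) (φ h) = ∑ i ∈ s, φ (p i) ⊗ₜ[k] φ (q i) := by
  rw [hφ.2.2.1, hr, map_sum]
  simp

lemma comul_antipode_repr {h : H} {s : Finset ℕ} {p q : ℕ → H}
    (hr : Coalgebra.comul (R := k) h = ∑ i ∈ s, p i ⊗ₜ[k] q i) :
    Coalgebra.comul (R := k) (S h) = ∑ i ∈ s, S (q i) ⊗ₜ[k] S (p i) := by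
  rw [ConvAux.comul_antipode, hr, map_sum, map_sum]
  simp

lemma sinv_mul {Sinv : H → H} (hS : IsAntipodeInv k H Sinv) (a b : H) :
    Sinv (a * b) = Sinv b * Sinv a := by
  have : a * b = S (Sinv b * Sinv a) := by
    rw [ConvAux.antipode_mul, hS.1, hS.1]
  rw [this, hS.2]

lemma contract_eq {V : Type} [AddCommGroup V] [Module k V]
    (z : Module.Dual k V ⊗[k] H) (v : V) :
    TensorProduct.lid k H (LinearMap.rTensor H (Module.Dual.eval k V v) z)
      = dualTensorHom k V H z v := by
  induction z using TensorProduct.induction_on with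
  | zero => simp
  | tmul f h => simp [Module.Dual.eval]
  | add x y hx hy => simp only [map_add, LinearMap.add_apply, hx, hy]

end GYDAux

set_option maxHeartbeats 1000000
set_option synthInstance.maxHeartbeats 200000

theorem statement_6
    (k H : Type) [Field k] [Ring H] [HopfAlgebra k H]
    (Sinv : H → H) (hS : GYD.IsAntipodeInv k H Sinv)
    (α β γ δ : H ≃ₗ[k] H)
    (hα : GYD.IsHopfAut k H α) (hβ : GYD.IsHopfAut k H β)
    (hγ : GYD.IsHopfAut k H γ) (hδ : GYD.IsHopfAut k H δ)
    (M N : Type) [AddCommGroup M] [Module k M] [AddCommGroup N] [Module k N]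
    [FiniteDimensional k M] [FiniteDimensional k N]
    (actM : H →ₗ[k] M →ₗ[k] M) (coactM : M →ₗ[k] M ⊗[k] H)
    (actN : H →ₗ[k] N →ₗ[k] N) (coactN : N →ₗ[k] N ⊗[k] H)
    (hM : GYD.IsYD k H Sinv ⇑α ⇑β actM coactM)
    (hN : GYD.IsYD k H Sinv ⇑γ ⇑δ actN coactN)
    -- the left dual N^* of N, an (γ⁻¹, γδ⁻¹γ⁻¹)-Yetter-Drinfeld module
    (actNs : H →ₗ[k] Module.Dual k N →ₗ[k] Module.Dual k N)
    (coactNs : Module.Dual k N →ₗ[k] Module.Dual k N ⊗[k] H)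
    (hactNs : GYD.DualActChar k H
      (fun h => δ.symm (γ.symm (HopfAlgebra.antipode (R := k) h))) actN actNs)
    (hcoactNs : GYD.DualCoactChar k H Sinv coactN coactNs)
    -- the left dual M^* of M, an (α⁻¹, αβ⁻¹α⁻¹)-Yetter-Drinfeld module
    (actMs : H →ₗ[k] Module.Dual k M →ₗ[k] Module.Dual k M)
    (coactMs : Module.Dual k M →ₗ[k] Module.Dual k M ⊗[k] H)
    (hactMs : GYD.DualActChar k H
      (fun h => β.symm (α.symm (HopfAlgebra.antipode (R := k) h))) actM actMs)
    (hcoactMs : GYD.DualCoactChar k H Sinv coactM coactMs)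
    -- N^* ⊗̂ M^*
    (actDom : H →ₗ[k] (Module.Dual k N ⊗[k] Module.Dual k M)
        →ₗ[k] (Module.Dual k N ⊗[k] Module.Dual k M))
    (coactDom : Module.Dual k N ⊗[k] Module.Dual k M
        →ₗ[k] (Module.Dual k N ⊗[k] Module.Dual k M) ⊗[k] H)
    (hactDom : GYD.TensorActChar k H ⇑α.symm
      (fun h => α (γ (δ.symm (γ.symm (α.symm h))))) actNs actMs actDom)
    (hcoactDom : GYD.TensorCoactChar k H coactNs coactMs coactDom)
    -- M ⊗̂ N, an (αγ, δγ⁻¹βγ)-Yetter-Drinfeld module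
    (actT : H →ₗ[k] (M ⊗[k] N) →ₗ[k] (M ⊗[k] N))
    (coactT : M ⊗[k] N →ₗ[k] (M ⊗[k] N) ⊗[k] H)
    (hactT : GYD.TensorActChar k H ⇑γ (fun h => γ.symm (β (γ h))) actM actN actT)
    (hcoactT : GYD.TensorCoactChar k H coactM coactN coactT)
    -- the left dual (M ⊗̂ N)^*
    (actCod : H →ₗ[k] Module.Dual k (M ⊗[k] N) →ₗ[k] Module.Dual k (M ⊗[k] N))
    (coactCod : Module.Dual k (M ⊗[k] N) →ₗ[k] Module.Dual k (M ⊗[k] N) ⊗[k] H)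
    (hactCod : GYD.DualActChar k H
      (fun h => γ.symm (β.symm (γ (δ.symm (γ.symm (α.symm
        (HopfAlgebra.antipode (R := k) h))))))) actT actCod)
    (hcoactCod : GYD.DualCoactChar k H Sinv coactT coactCod)
    -- the map Ψ
    (Ψ : Module.Dual k N ⊗[k] Module.Dual k M →ₗ[k] Module.Dual k (M ⊗[k] N))
    (hΨ : ∀ (g : Module.Dual k N) (f : Module.Dual k M) (m : M) (n : N),
        Ψ (g ⊗ₜ[k] f) (m ⊗ₜ[k] n) = f m * g n) :
    Function.Bijective Ψ ∧
    (∀ (h : H) (x : Module.Dual k N ⊗[k] Module.Dual k M), Ψ (actDom h x) = actCod h (Ψ x)) ∧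
    (∀ x : Module.Dual k N ⊗[k] Module.Dual k M,
        coactCod (Ψ x) = LinearMap.rTensor H Ψ (coactDom x)) := by
  refine ⟨?_, ?_, ?_⟩
  · -- bijectivity
    have hΨeq : Ψ = (TensorProduct.dualDistribEquiv k M N).toLinearMap ∘ₗ
        (TensorProduct.comm k (Module.Dual k N) (Module.Dual k M)).toLinearMap := by
      apply TensorProduct.ext'
      intro g f
      apply TensorProduct.ext'
      intro m n
      rw [hΨ]
      simp [TensorProduct.dualDistribEquiv]
    rw [hΨeq, LinearMap.coe_comp, LinearEquiv.coe_coe, LinearEquiv.coe_coe]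
    exact Function.Bijective.comp (TensorProduct.dualDistribEquiv k M N).bijective
      (TensorProduct.comm k (Module.Dual k N) (Module.Dual k M)).bijective
  · -- H-linearity
    intro h x
    induction x using TensorProduct.induction_on with
    | zero => simp
    | add a b ha hb => simp only [map_add, ha, hb]
    | tmul g f =>
      obtain ⟨s, p, q, hpq⟩ := GYDAux.exists_nat_repr (Coalgebra.comul (R := k) h)
      have hαS := GYDAux.aut_antipode_comm hα
      have hγS := GYDAux.aut_antipode_comm hγ
      have hαsS := GYDAux.aut_antipode_comm (GYDAux.hopfAut_symm hα)
      have hγsS := GYDAux.aut_antipode_comm (GYDAux.hopfAut_symm hγ)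
      have hδsS := GYDAux.aut_antipode_comm (GYDAux.hopfAut_symm hδ)
      have hc1 := GYDAux.comul_antipode_repr (k := k) hpq
      have hc2 := GYDAux.comul_aut_repr (GYDAux.hopfAut_symm hα) hc1
      have hc3 := GYDAux.comul_aut_repr (GYDAux.hopfAut_symm hγ) hc2
      have hc4 := GYDAux.comul_aut_repr (GYDAux.hopfAut_symm hδ) hc3
      have hc5 := GYDAux.comul_aut_repr hγ hc4
      have hc6 := GYDAux.comul_aut_repr (GYDAux.hopfAut_symm hβ) hc5
      have hc7 := GYDAux.comul_aut_repr (GYDAux.hopfAut_symm hγ) hc6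
      rw [hactDom h g f s p q hpq]
      refine TensorProduct.ext' fun m n => ?_
      rw [hactCod h (Ψ (g ⊗ₜ[k] f)) (m ⊗ₜ[k] n)]
      rw [hactT _ m n s _ _ hc7]
      rw [map_sum, map_sum, LinearMap.sum_apply]
      refine Finset.sum_congr rfl fun i _ => ?_
      rw [hΨ, hΨ, hactMs, hactNs]
      simp only [hαS, hγS, hαsS, hγsS, hδsS, LinearEquiv.apply_symm_apply,
        LinearEquiv.symm_apply_apply]
  · -- H-colinearity
    have hinj : Function.Injective (dualTensorHom k (M ⊗[k] N) H) := by
      intro z w hzw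
      have h1 := dualTensorHomEquivOfBasis_symm_cancel_left
        (Module.Free.chooseBasis k (M ⊗[k] N)) (N := H) z
      have h2 := dualTensorHomEquivOfBasis_symm_cancel_left
        (Module.Free.chooseBasis k (M ⊗[k] N)) (N := H) w
      rw [← h1, ← h2, hzw]
    intro x
    induction x using TensorProduct.induction_on with
    | zero => simp
    | add a b ha hb => simp only [map_add, ha, hb]
    | tmul g f =>
      apply hinj
      refine TensorProduct.ext' fun m n => ?_
      rw [← GYDAux.contract_eq, ← GYDAux.contract_eq]
      obtain ⟨si, m₀, m₁, hm⟩ := GYDAux.exists_nat_repr (coactM m)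
      obtain ⟨ti, n₀, n₁, hn⟩ := GYDAux.exists_nat_repr (coactN n)
      obtain ⟨u, g₀, g₁, hg⟩ := GYDAux.exists_nat_repr (coactNs g)
      obtain ⟨v, f₀, f₁, hf⟩ := GYDAux.exists_nat_repr (coactMs f)
      have hT := hcoactT m n si ti m₀ m₁ n₀ n₁ hm hn
      set s' : Finset ℕ := (si ×ˢ ti).image (fun p => Nat.pair p.1 p.2) with hs'
      have hpairinj : ∀ p ∈ si ×ˢ ti, ∀ r ∈ si ×ˢ ti,
          Nat.pair p.1 p.2 = Nat.pair r.1 r.2 → p = r := by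
        intro p _ r _ hpr
        obtain ⟨h1, h2⟩ := Nat.pair_eq_pair.mp hpr
        exact Prod.ext h1 h2
      have himg : ∀ (F : ℕ → (M ⊗[k] N) ⊗[k] H),
          ∑ e ∈ s', F e = ∑ p ∈ si ×ˢ ti, F (Nat.pair p.1 p.2) := by
        intro F; rw [hs', Finset.sum_image hpairinj]
      have hsum : coactT (m ⊗ₜ[k] n) = ∑ e ∈ s',
          (m₀ e.unpair.1 ⊗ₜ[k] n₀ e.unpair.2) ⊗ₜ[k] (n₁ e.unpair.2 * m₁ e.unpair.1) := by
        rw [himg, hT, Finset.sum_product]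
        exact Finset.sum_congr rfl fun i _ => Finset.sum_congr rfl fun j _ => by
          rw [Nat.unpair_pair]
      rw [hcoactCod (Ψ (g ⊗ₜ[k] f)) (m ⊗ₜ[k] n) s' _ _ hsum]
      -- compute the right-hand side explicitly
      rw [hcoactDom g f u v g₀ g₁ f₀ f₁ hg hf]
      simp only [map_sum, LinearMap.rTensor_tmul, TensorProduct.lid_tmul,
        Module.Dual.eval_apply]
      -- now both sides are explicit sums of scalars times elements of H
      have hLHS : ∑ e ∈ s', Ψ (g ⊗ₜ[k] f) (m₀ e.unpair.1 ⊗ₜ[k] n₀ e.unpair.2)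
            • Sinv (n₁ e.unpair.2 * m₁ e.unpair.1)
          = ∑ i ∈ si, ∑ j ∈ ti,
            (f (m₀ i) * g (n₀ j)) • (Sinv (m₁ i) * Sinv (n₁ j)) := by
        rw [hs', Finset.sum_image hpairinj, Finset.sum_product]
        refine Finset.sum_congr rfl fun i _ => Finset.sum_congr rfl fun j _ => ?_
        rw [Nat.unpair_pair]
        rw [hΨ, GYDAux.sinv_mul hS]
      have hfm : ∑ b ∈ v, f₀ b m • f₁ b = ∑ i ∈ si, f (m₀ i) • Sinv (m₁ i) := by
        have h1 := hcoactMs f m si m₀ m₁ hm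
        rw [hf] at h1
        simpa only [map_sum, LinearMap.rTensor_tmul, TensorProduct.lid_tmul,
          Module.Dual.eval_apply] using h1
      have hgn : ∑ a ∈ u, g₀ a n • g₁ a = ∑ j ∈ ti, g (n₀ j) • Sinv (n₁ j) := by
        have h1 := hcoactNs g n ti n₀ n₁ hn
        rw [hg] at h1
        simpa only [map_sum, LinearMap.rTensor_tmul, TensorProduct.lid_tmul,
          Module.Dual.eval_apply] using h1
      rw [hLHS]
      have hRHS : ∑ a ∈ u, ∑ b ∈ v, Ψ (g₀ a ⊗ₜ[k] f₀ b) (m ⊗ₜ[k] n) • (f₁ b * g₁ a)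
          = (∑ b ∈ v, f₀ b m • f₁ b) * (∑ a ∈ u, g₀ a n • g₁ a) := by
        rw [Finset.sum_mul_sum, Finset.sum_comm]
        refine Finset.sum_congr rfl fun a _ => Finset.sum_congr rfl fun b _ => ?_
        rw [hΨ, smul_mul_smul_comm]
      rw [hRHS, hfm, hgn, Finset.sum_mul_sum]
      exact Finset.sum_congr rfl fun i _ => Finset.sum_congr rfl fun j _ =>
        (smul_mul_smul_comm _ _ _ _).symm

end
end

section
/- Let α, β, γ ∈ Aut_Hopf(H) and let M be a finite-dimensional (αβ,γβ)-Yetter-Drinfeld module; let F(M) be the (α,γ)-Yetter-Drinfeld module obtained from M via the functor F (action h → m = β⁻¹(h)·m, unchanged coaction). Then End(M) = End(F(M)) and End(M)^op = End(F(M))^op as algebras in _H𝒴𝒟^H, i.e. the algebra structures, left H-actions and right H-coactions coincide. -/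
open TensorProduct

noncomputable section

namespace GYDaux

variable {k M N H : Type} [Field k] [AddCommGroup M] [Module k M]
  [AddCommGroup N] [Module k N]

theorem exists_repr (x : M ⊗[k] N) :
    ∃ (n : ℕ) (p : ℕ → M) (q : ℕ → N), x = ∑ i ∈ Finset.range n, p i ⊗ₜ[k] q i := by
  induction x with
  | zero => exact ⟨0, 0, 0, by simp⟩
  | tmul m n => exact ⟨1, fun _ => m, fun _ => n, by simp⟩
  | add x y hx hy =>
    obtain ⟨n₁, p₁, q₁, h₁⟩ := hx
    obtain ⟨n₂, p₂, q₂, h₂⟩ := hy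
    refine ⟨n₁ + n₂, fun i => if i < n₁ then p₁ i else p₂ (i - n₁),
      fun i => if i < n₁ then q₁ i else q₂ (i - n₁), ?_⟩
    rw [Finset.sum_range_add, h₁, h₂]
    congr 1
    · exact Finset.sum_congr rfl fun i hi => by
        simp [Finset.mem_range.mp hi]
    · exact Finset.sum_congr rfl fun i _ => by simp

theorem rTensorHomToHomRTensor_eq [AddCommGroup H] [Module k H]
    (x : Module.End k M ⊗[k] H) (m : M) :
    TensorProduct.rTensorHomToHomRTensor (RingHom.id k) M M H x m
      = LinearMap.rTensor H (LinearMap.applyₗ (R := k) m) x := by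
  induction x with
  | zero => simp
  | tmul u h => simp [TensorProduct.rTensorHomToHomRTensor_apply]
  | add x y hx hy => simp [map_add, hx, hy]

theorem rTensor_apply_inj [FiniteDimensional k M] [AddCommGroup H] [Module k H]
    (x y : Module.End k M ⊗[k] H)
    (h : ∀ m : M, LinearMap.rTensor H (LinearMap.applyₗ (R := k) m) x
        = LinearMap.rTensor H (LinearMap.applyₗ (R := k) m) y) : x = y := by
  have h2 : TensorProduct.rTensorHomToHomRTensor (RingHom.id k) M M H x
      = TensorProduct.rTensorHomToHomRTensor (RingHom.id k) M M H y :=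
    LinearMap.ext fun m => by
      rw [rTensorHomToHomRTensor_eq, rTensorHomToHomRTensor_eq]; exact h m
  have := (rTensorHomEquivHomRTensor k M M H).injective
  rw [← rTensorHomEquivHomRTensor_apply, ← rTensorHomEquivHomRTensor_apply] at h2
  exact this h2

theorem rTensor_apply_op_inj [FiniteDimensional k M] [AddCommGroup H] [Module k H]
    (x y : (Module.End k M)ᵐᵒᵖ ⊗[k] H)
    (h : ∀ m : M, LinearMap.rTensor H ((LinearMap.applyₗ (R := k) m).comp
          (MulOpposite.opLinearEquiv k).symm.toLinearMap) x
        = LinearMap.rTensor H ((LinearMap.applyₗ (R := k) m).comp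
          (MulOpposite.opLinearEquiv k).symm.toLinearMap) y) : x = y := by
  set e := TensorProduct.congr
    ((MulOpposite.opLinearEquiv k (M := Module.End k M)).symm) (LinearEquiv.refl k H)
  have key : ∀ z : (Module.End k M)ᵐᵒᵖ ⊗[k] H, ∀ m : M,
      LinearMap.rTensor H (LinearMap.applyₗ (R := k) m) (e z)
        = LinearMap.rTensor H ((LinearMap.applyₗ (R := k) m).comp
          (MulOpposite.opLinearEquiv k).symm.toLinearMap) z := by
    intro z m
    induction z with
    | zero => simp
    | tmul u h => simp [e]
    | add a b ha hb => simp [map_add, ha, hb]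
  have : e x = e y := rTensor_apply_inj _ _ fun m => by rw [key, key]; exact h m
  exact e.injective this

end GYDaux

theorem statement_9
    (k H : Type) [Field k] [Ring H] [HopfAlgebra k H]
    (Sinv : H → H) (hS : GYD.IsAntipodeInv k H Sinv)
    (α β γ : H ≃ₗ[k] H)
    (hα : GYD.IsHopfAut k H α) (hβ : GYD.IsHopfAut k H β) (hγ : GYD.IsHopfAut k H γ)
    (M : Type) [AddCommGroup M] [Module k M] [FiniteDimensional k M]
    (actM : H →ₗ[k] M →ₗ[k] M) (coactM : M →ₗ[k] M ⊗[k] H)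
    (hM : GYD.IsYD k H Sinv (⇑α ∘ ⇑β) (⇑γ ∘ ⇑β) actM coactM)
    -- End(M), for M an (αβ, γβ)-Yetter-Drinfeld module
    (actE₁ : H →ₗ[k] Module.End k M →ₗ[k] Module.End k M)
    (coactE₁ : Module.End k M →ₗ[k] Module.End k M ⊗[k] H)
    (hactE₁ : GYD.EndActChar k H (fun h => β.symm (α.symm h)) actM actE₁)
    (hcoactE₁ : GYD.EndCoactChar k H Sinv coactM coactE₁)
    -- End(F(M)), for F(M) the corresponding (α, γ)-Yetter-Drinfeld module
    (actE₂ : H →ₗ[k] Module.End k M →ₗ[k] Module.End k M)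
    (coactE₂ : Module.End k M →ₗ[k] Module.End k M ⊗[k] H)
    (hactE₂ : GYD.EndActChar k H ⇑α.symm (actM ∘ₗ β.symm.toLinearMap) actE₂)
    (hcoactE₂ : GYD.EndCoactChar k H Sinv coactM coactE₂)
    -- End(M)^op
    (actO₁ : H →ₗ[k] (Module.End k M)ᵐᵒᵖ →ₗ[k] (Module.End k M)ᵐᵒᵖ)
    (coactO₁ : (Module.End k M)ᵐᵒᵖ →ₗ[k] (Module.End k M)ᵐᵒᵖ ⊗[k] H)
    (hactO₁ : GYD.EndOpActChar k H (fun h => β.symm (γ.symm h)) Sinv actM actO₁)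
    (hcoactO₁ : GYD.EndOpCoactChar k H coactM coactO₁)
    -- End(F(M))^op
    (actO₂ : H →ₗ[k] (Module.End k M)ᵐᵒᵖ →ₗ[k] (Module.End k M)ᵐᵒᵖ)
    (coactO₂ : (Module.End k M)ᵐᵒᵖ →ₗ[k] (Module.End k M)ᵐᵒᵖ ⊗[k] H)
    (hactO₂ : GYD.EndOpActChar k H ⇑γ.symm Sinv (actM ∘ₗ β.symm.toLinearMap) actO₂)
    (hcoactO₂ : GYD.EndOpCoactChar k H coactM coactO₂) :
    actE₁ = actE₂ ∧ coactE₁ = coactE₂ ∧ actO₁ = actO₂ ∧ coactO₁ = coactO₂ := by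
  obtain ⟨hS1, hS2⟩ := hS
  refine ⟨?_, ?_, ?_, ?_⟩
  · refine LinearMap.ext fun h => LinearMap.ext fun u => LinearMap.ext fun m => ?_
    obtain ⟨n, p, q, hpq⟩ := GYDaux.exists_repr (Coalgebra.comul (R := k) h)
    rw [hactE₁ h u m (Finset.range n) p q hpq, hactE₂ h u m (Finset.range n) p q hpq]
    simp [LinearMap.comp_apply]
  · refine LinearMap.ext fun u => ?_
    apply GYDaux.rTensor_apply_inj
    intro m
    obtain ⟨n, m₀, m₁, hm⟩ := GYDaux.exists_repr (coactM m)
    choose r n₀ n₁ hr using fun j => GYDaux.exists_repr (coactM (u (m₀ j)))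
    rw [hcoactE₁ u m (Finset.range n) m₀ m₁ (fun j => Finset.range (r j)) n₀ n₁ hm
        (fun j _ => hr j),
      hcoactE₂ u m (Finset.range n) m₀ m₁ (fun j => Finset.range (r j)) n₀ n₁ hm
        (fun j _ => hr j)]
  · refine LinearMap.ext fun h => LinearMap.ext fun u => ?_
    apply MulOpposite.unop_injective
    refine LinearMap.ext fun m => ?_
    obtain ⟨n, p, q, hpq⟩ := GYDaux.exists_repr (Coalgebra.comul (R := k) h)
    rw [hactO₁ h u m (Finset.range n) p q hpq, hactO₂ h u m (Finset.range n) p q hpq]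
    simp [LinearMap.comp_apply]
  · refine LinearMap.ext fun u => ?_
    apply GYDaux.rTensor_apply_op_inj
    intro m
    obtain ⟨n, m₀, m₁, hm⟩ := GYDaux.exists_repr (coactM m)
    choose r n₀ n₁ hr using fun j => GYDaux.exists_repr (coactM (u.unop (m₀ j)))
    rw [hcoactO₁ u m (Finset.range n) m₀ m₁ (fun j => Finset.range (r j)) n₀ n₁ hm
        (fun j _ => hr j),
      hcoactO₂ u m (Finset.range n) m₀ m₁ (fun j => Finset.range (r j)) n₀ n₁ hm
        (fun j _ => hr j)]


end
end

section
/- Let α, β ∈ Aut_Hopf(H) and M an (α,β)-Yetter-Drinfeld module. Define M' to be the same vector space with the same left H-module structure and with right H-coaction m ↦ m₍₀₎ ⊗ αβ⁻¹(m₍₁₎), where m ↦ m₍₀₎ ⊗ m₍₁₎ is the coaction of M. Then M' is an (αβ⁻¹α, α)-Yetter-Drinfeld module. -/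
open TensorProduct

noncomputable section

theorem statement_13
    (k H : Type) [Field k] [Ring H] [HopfAlgebra k H]
    (Sinv : H → H) (hS : GYD.IsAntipodeInv k H Sinv)
    (α β : H ≃ₗ[k] H)
    (hα : GYD.IsHopfAut k H α) (hβ : GYD.IsHopfAut k H β)
    (M : Type) [AddCommGroup M] [Module k M]
    (actM : H →ₗ[k] M →ₗ[k] M) (coactM : M →ₗ[k] M ⊗[k] H)
    (hM : GYD.IsYD k H Sinv ⇑α ⇑β actM coactM) :
    GYD.IsYD k H Sinv (fun h => α (β.symm (α h))) ⇑α actM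
      ((LinearMap.lTensor M (β.symm.trans α).toLinearMap) ∘ₗ coactM) :=   by
  classical
  obtain ⟨hact1, hactmul, hcoassoc, hcounit, hyd⟩ := hM
  set φ : H ≃ₗ[k] H := β.symm.trans α with hφ
  have hφapp : ∀ h : H, φ h = α (β.symm h) := fun h => rfl
  have hβsmul : ∀ x y : H, β.symm (x * y) = β.symm x * β.symm y := by
    intro x y
    apply β.injective
    rw [hβ.1, β.apply_symm_apply, β.apply_symm_apply, β.apply_symm_apply]
  have hφmul : ∀ x y : H, φ (x * y) = φ x * φ y := by
    intro x y
    rw [hφapp, hφapp, hφapp, hβsmul, hα.1]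
  have hmapmap : ∀ x : H ⊗[k] H,
      TensorProduct.map β.symm.toLinearMap β.symm.toLinearMap
        (TensorProduct.map β.toLinearMap β.toLinearMap x) = x := by
    intro x
    induction x using TensorProduct.induction_on with
    | zero => simp
    | tmul a b => simp
    | add a b ha hb => simp [ha, hb]
  have hβscomul : ∀ h : H, Coalgebra.comul (R := k) (β.symm h)
      = TensorProduct.map β.symm.toLinearMap β.symm.toLinearMap
          (Coalgebra.comul (R := k) h) := by
    intro h
    have := hβ.2.2.1 (β.symm h)
    rw [β.apply_symm_apply] at this
    rw [this, hmapmap]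
  have hφcomul : ∀ h : H, Coalgebra.comul (R := k) (φ h)
      = TensorProduct.map φ.toLinearMap φ.toLinearMap (Coalgebra.comul (R := k) h) := by
    intro h
    rw [hφapp, hα.2.2.1, hβscomul]
    generalize Coalgebra.comul (R := k) h = x
    induction x using TensorProduct.induction_on with
    | zero => simp
    | tmul a b => simp [hφapp]
    | add a b ha hb => simp [ha, hb]
  have hφcounit : ∀ h : H, Coalgebra.counit (R := k) (φ h) = Coalgebra.counit (R := k) h := by
    intro h
    have h1 := hβ.2.2.2 (β.symm h)
    rw [β.apply_symm_apply] at h1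
    rw [hφapp, hα.2.2.2, ← h1]
  refine ⟨hact1, hactmul, ?_, ?_, ?_⟩
  · -- coassociativity
    intro m
    have hcomp : Coalgebra.comul (R := k) ∘ₗ φ.toLinearMap
        = TensorProduct.map φ.toLinearMap φ.toLinearMap ∘ₗ Coalgebra.comul (R := k) :=
      LinearMap.ext fun h => hφcomul h
    have key : ∀ y : M ⊗[k] (H ⊗[k] H),
        LinearMap.rTensor H (LinearMap.lTensor M φ.toLinearMap)
          (LinearMap.lTensor (M ⊗[k] H) φ.toLinearMap
            ((TensorProduct.assoc k M H H).symm y))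
        = (TensorProduct.assoc k M H H).symm
            (LinearMap.lTensor M (TensorProduct.map φ.toLinearMap φ.toLinearMap) y) := by
      intro y
      induction y using TensorProduct.induction_on with
      | zero => simp
      | tmul a b =>
        induction b using TensorProduct.induction_on with
        | zero => simp
        | tmul c d => simp
        | add c d hc hd =>
          simp only [TensorProduct.tmul_add, map_add] at hc hd ⊢
          rw [hc, hd]
      | add a b ha hb => simp [ha, hb]
    calc LinearMap.rTensor H (LinearMap.lTensor M φ.toLinearMap ∘ₗ coactM)
          ((LinearMap.lTensor M φ.toLinearMap ∘ₗ coactM) m)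
        = LinearMap.rTensor H (LinearMap.lTensor M φ.toLinearMap)
            (LinearMap.rTensor H coactM
              (LinearMap.lTensor M φ.toLinearMap (coactM m))) := by
          rw [LinearMap.rTensor_comp]; rfl
      _ = LinearMap.rTensor H (LinearMap.lTensor M φ.toLinearMap)
            (LinearMap.lTensor (M ⊗[k] H) φ.toLinearMap
              (LinearMap.rTensor H coactM (coactM m))) := by
          congr 1
          have : LinearMap.rTensor H coactM ∘ₗ LinearMap.lTensor M φ.toLinearMap
              = LinearMap.lTensor (M ⊗[k] H) φ.toLinearMap ∘ₗ LinearMap.rTensor H coactM := by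
            rw [LinearMap.rTensor_comp_lTensor, LinearMap.lTensor_comp_rTensor]
          exact LinearMap.congr_fun this (coactM m)
      _ = LinearMap.rTensor H (LinearMap.lTensor M φ.toLinearMap)
            (LinearMap.lTensor (M ⊗[k] H) φ.toLinearMap
              ((TensorProduct.assoc k M H H).symm
                (LinearMap.lTensor M (Coalgebra.comul (R := k)) (coactM m)))) := by
          rw [hcoassoc]
      _ = (TensorProduct.assoc k M H H).symm
            (LinearMap.lTensor M (TensorProduct.map φ.toLinearMap φ.toLinearMap)
              (LinearMap.lTensor M (Coalgebra.comul (R := k)) (coactM m))) := key _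
      _ = (TensorProduct.assoc k M H H).symm
            (LinearMap.lTensor M (Coalgebra.comul (R := k))
              ((LinearMap.lTensor M φ.toLinearMap ∘ₗ coactM) m)) := by
          congr 1
          rw [← LinearMap.lTensor_comp_apply, ← hcomp, LinearMap.lTensor_comp_apply]
          rfl
  · -- counit
    intro m
    have : LinearMap.lTensor M (Coalgebra.counit (R := k))
          ((LinearMap.lTensor M φ.toLinearMap ∘ₗ coactM) m)
        = LinearMap.lTensor M (Coalgebra.counit (R := k)) (coactM m) := by
      rw [LinearMap.comp_apply, ← LinearMap.lTensor_comp_apply]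
      have : (Coalgebra.counit (R := k)) ∘ₗ φ.toLinearMap = Coalgebra.counit (R := k) :=
        LinearMap.ext fun h => hφcounit h
      rw [this]
    rw [this, hcounit]
  · -- YD compatibility
    intro h m s t a b c m₀ m₁ h1 h2
    have hrep : coactM m = ∑ j ∈ t, m₀ j ⊗ₜ[k] φ.symm (m₁ j) := by
      have hinv : ∀ x : M ⊗[k] H,
          LinearMap.lTensor M φ.symm.toLinearMap (LinearMap.lTensor M φ.toLinearMap x) = x := by
        intro x
        induction x using TensorProduct.induction_on with
        | zero => simp
        | tmul a b => simp
        | add a b ha hb => simp [ha, hb]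
      have := congrArg (LinearMap.lTensor M φ.symm.toLinearMap) h2
      rw [LinearMap.comp_apply, hinv] at this
      rw [this, map_sum]
      simp [LinearMap.lTensor_tmul]
    have hbase := hyd h m s t a b c m₀ (fun j => φ.symm (m₁ j)) h1 hrep
    rw [LinearMap.comp_apply, hbase, map_sum]
    refine Finset.sum_congr rfl fun i _ => ?_
    rw [map_sum]
    refine Finset.sum_congr rfl fun j _ => ?_
    rw [LinearMap.lTensor_tmul]
    congr 1
    show φ (β (c i) * φ.symm (m₁ j) * α (Sinv (a i))) = _
    rw [hφmul, hφmul, φ.apply_symm_apply, hφapp, hφapp, β.symm_apply_apply]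


end
end
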